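/- If a Borel measure μ on ℝ^D is invariant under a linear isometry R ∈ O(D), i.e. μ(R⁻¹A) = μ(A) for all measurable A, then its moment matrix satisfies η_R G η_Rᵀ = G, the Cholesky factors satisfy η_R S η_R⁻¹ = S and η_R H η_Rᵀ = H, and consequently the multivariate orthogonal polynomials satisfy P(Rx) = η_R P(x) and the Christoffel–Darboux kernel is invariant: K^{(ℓ)}(Rx, Ry) = K^{(ℓ)}(x, y). -/

import Mathlib

open MeasureTheory Matrix

namespace MVOPR19

/-- Total degree of a multi-index. -/
def deg {D : ℕ} (α : Fin D → ℕ) : ℕ := ∑ a, α a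

/-- The (finite) set of multi-indices of total degree `< ℓ`. -/
def belowSet (D ℓ : ℕ) : Finset (Fin D → ℕ) :=
  (Finset.range ℓ).biUnion fun k => Finset.Nat.antidiagonalTuple D k

/-- The moment matrix `G_{α,β} = ∫ x^{α+β} dμ` of a measure on `ℝ^D`. -/
noncomputable def momG (D : ℕ) (μ : Measure (Fin D → ℝ)) :
    (Fin D → ℕ) → (Fin D → ℕ) → ℝ :=
  fun α β => ∫ x, ∏ a, x a ^ (α a + β a) ∂μ

/-- The truncated moment matrix `G^{[ℓ]}`, on multi-indices of degree `< ℓ`. -/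
noncomputable def momGTrunc (D ℓ : ℕ) (μ : Measure (Fin D → ℝ)) :
    Matrix (belowSet D ℓ) (belowSet D ℓ) ℝ :=
  Matrix.of fun i j => momG D μ i.1 j.1

/-- The `k`-th diagonal block `H_{[k]}` of the block diagonal matrix `H`. -/
def Hblock (D k : ℕ) (H : (Fin D → ℕ) → (Fin D → ℕ) → ℝ) :
    Matrix (Finset.Nat.antidiagonalTuple D k) (Finset.Nat.antidiagonalTuple D k) ℝ :=
  Matrix.of fun i j => H i.1 j.1

/-- The orthogonal polynomials `P_α(x) = Σ_β S_{α,β} x^β`. -/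
noncomputable def mvP {D : ℕ} (S : (Fin D → ℕ) → (Fin D → ℕ) → ℝ)
    (α : Fin D → ℕ) (x : Fin D → ℝ) : ℝ :=
  ∑ᶠ β, S α β * ∏ a, x a ^ β a

/-- The Christoffel–Darboux kernel
`K^{(ℓ)}(x,y) = Σ_{k<ℓ} P_{[k]}(x)ᵀ H_{[k]}⁻¹ P_{[k]}(y)`. -/
noncomputable def CDker (D ℓ : ℕ) (S H : (Fin D → ℕ) → (Fin D → ℕ) → ℝ)
    (x y : Fin D → ℝ) : ℝ :=
  ∑ k ∈ Finset.range ℓ,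
    ∑ i : Finset.Nat.antidiagonalTuple D k,
      ∑ j : Finset.Nat.antidiagonalTuple D k,
        mvP S i.1 x * (Hblock D k H)⁻¹ i j * mvP S j.1 y

/-! ### Auxiliary lemmas -/

section aux
variable {D : ℕ}

lemma swapSum {ι κ : Type*} (s : Finset ι) (t : Finset κ) (f : ι → κ → ℝ) :
    (∑ i ∈ s, ∑ j ∈ t, f i j) = ∑ j ∈ t, ∑ i ∈ s, f i j := Finset.sum_comm

lemma shuffle {ι₁ ι₂ ι₃ ι₄ : Type*} (s1 : Finset ι₁) (s2 : Finset ι₂) (s3 : Finset ι₃)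
    (s4 : Finset ι₄) (a : ι₃ → ι₁ → ℝ) (g : ι₁ → ι₂ → ℝ) (b : ι₄ → ι₂ → ℝ) :
    ∑ δ ∈ s2, (∑ γ ∈ s1, (∑ γ' ∈ s3, a γ' γ) * g γ δ) * (∑ δ' ∈ s4, b δ' δ)
      = ∑ γ' ∈ s3, ∑ δ' ∈ s4, ∑ γ ∈ s1, ∑ δ ∈ s2, a γ' γ * g γ δ * b δ' δ := by
  calc ∑ δ ∈ s2, (∑ γ ∈ s1, (∑ γ' ∈ s3, a γ' γ) * g γ δ) * (∑ δ' ∈ s4, b δ' δ)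
      = ∑ δ ∈ s2, ∑ δ' ∈ s4, ∑ γ ∈ s1, ∑ γ' ∈ s3, a γ' γ * g γ δ * b δ' δ := by
        simp only [Finset.sum_mul, Finset.mul_sum]
    _ = ∑ δ' ∈ s4, ∑ δ ∈ s2, ∑ γ ∈ s1, ∑ γ' ∈ s3, a γ' γ * g γ δ * b δ' δ :=
        swapSum s2 s4 _
    _ = ∑ δ' ∈ s4, ∑ γ ∈ s1, ∑ δ ∈ s2, ∑ γ' ∈ s3, a γ' γ * g γ δ * b δ' δ :=
        Finset.sum_congr rfl fun δ' _ => swapSum s2 s1 _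
    _ = ∑ δ' ∈ s4, ∑ γ ∈ s1, ∑ γ' ∈ s3, ∑ δ ∈ s2, a γ' γ * g γ δ * b δ' δ :=
        Finset.sum_congr rfl fun δ' _ => Finset.sum_congr rfl fun γ _ => swapSum s2 s3 _
    _ = ∑ δ' ∈ s4, ∑ γ' ∈ s3, ∑ γ ∈ s1, ∑ δ ∈ s2, a γ' γ * g γ δ * b δ' δ :=
        Finset.sum_congr rfl fun δ' _ => swapSum s1 s3 _
    _ = ∑ γ' ∈ s3, ∑ δ' ∈ s4, ∑ γ ∈ s1, ∑ δ ∈ s2, a γ' γ * g γ δ * b δ' δ :=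
        swapSum s4 s3 _

lemma pull2 {ι κ : Type*} (s : Finset ι) (t : Finset κ) (c d : ℝ) (f : ι → ℝ)
    (g : ι → κ → ℝ) (h : κ → ℝ) :
    ∑ i ∈ s, ∑ j ∈ t, (c * f i) * g i j * (d * h j)
      = c * (∑ i ∈ s, ∑ j ∈ t, f i * g i j * h j) * d := by
  simp only [Finset.mul_sum, Finset.sum_mul]
  exact Finset.sum_congr rfl fun i _ => Finset.sum_congr rfl fun j _ => by ring

lemma mem_adt {k : ℕ} {β : Fin D → ℕ} : β ∈ Finset.Nat.antidiagonalTuple D k ↔ deg β = k :=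
  Finset.Nat.mem_antidiagonalTuple

lemma mem_below {ℓ : ℕ} {β : Fin D → ℕ} : β ∈ belowSet D ℓ ↔ deg β < ℓ := by
  simp only [belowSet, Finset.mem_biUnion, Finset.mem_range, mem_adt]
  constructor
  · rintro ⟨i, hi, rfl⟩; exact hi
  · intro h; exact ⟨deg β, h, rfl⟩

lemma finsum_sub (s : Finset (Fin D → ℕ)) (f : (Fin D → ℕ) → ℝ)
    (h : ∀ β, β ∉ s → f β = 0) : ∑ᶠ β, f β = ∑ β ∈ s, f β := by
  apply finsum_eq_finset_sum_of_support_subset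
  intro β hβ
  by_contra hm
  exact hβ (h β hm)

lemma sum_below_succ (d : ℕ) (f : (Fin D → ℕ) → ℝ) :
    ∑ β ∈ belowSet D (d + 1), f β
      = ∑ β ∈ belowSet D d, f β + ∑ β ∈ Finset.Nat.antidiagonalTuple D d, f β := by
  have : belowSet D (d + 1) = belowSet D d ∪ Finset.Nat.antidiagonalTuple D d := by
    ext β
    simp only [Finset.mem_union, mem_below, mem_adt]
    omega
  rw [this, Finset.sum_union]
  rw [Finset.disjoint_left]
  intro β h1 h2
  rw [mem_below] at h1
  rw [mem_adt] at h2
  omega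

/-- Linear independence of monomials. -/
lemma mono_indep (T : Finset (Fin D → ℕ)) (c : (Fin D → ℕ) → ℝ)
    (h : ∀ x : Fin D → ℝ, ∑ β ∈ T, c β * ∏ a, x a ^ β a = 0) :
    ∀ β ∈ T, c β = 0 := by
  set e := (Finsupp.equivFunOnFinite (α := Fin D) (M := ℕ)).symm
  set p : MvPolynomial (Fin D) ℝ := ∑ β ∈ T, MvPolynomial.monomial (e β) (c β) with hp
  have heval : ∀ x : Fin D → ℝ, MvPolynomial.eval x p = ∑ β ∈ T, c β * ∏ a, x a ^ β a := by
    intro x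
    rw [hp, map_sum]
    refine Finset.sum_congr rfl fun β _ => ?_
    rw [MvPolynomial.eval_monomial, Finsupp.prod_pow]
    simp [e, Finsupp.equivFunOnFinite]
    exact Or.inl rfl
  have hp0 : p = 0 := by
    apply MvPolynomial.funext
    intro x
    simp [heval, h x]
  intro β hβ
  have hc := congrArg (MvPolynomial.coeff (e β)) hp0
  rw [hp] at hc
  simp only [MvPolynomial.coeff_sum, MvPolynomial.coeff_monomial, MvPolynomial.coeff_zero] at hc
  rwa [Finset.sum_eq_single_of_mem β hβ (fun b _ hb => by
    rw [if_neg]; exact fun hcc => hb (e.injective hcc)), if_pos rfl] at hc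

lemma matrix_sandwich {n : Type*} [Fintype n] [DecidableEq n] (E A : Matrix n n ℝ)
    (hdetE : IsUnit E.det) (hEA : E * A * Eᵀ = A) : Eᵀ * A⁻¹ * E = A⁻¹ := by
  have hdetEt : IsUnit Eᵀ.det := by rwa [Matrix.det_transpose]
  have h1 : A⁻¹ = Eᵀ⁻¹ * (A⁻¹ * E⁻¹) := by
    conv_lhs => rw [← hEA]
    rw [Matrix.mul_inv_rev, Matrix.mul_inv_rev]
  calc Eᵀ * A⁻¹ * E = Eᵀ * (Eᵀ⁻¹ * (A⁻¹ * E⁻¹)) * E := by rw [← h1]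
    _ = A⁻¹ := by
        rw [← Matrix.mul_assoc, ← Matrix.mul_assoc, Matrix.mul_nonsing_inv _ hdetEt,
          Matrix.one_mul, Matrix.mul_assoc, Matrix.nonsing_inv_mul _ hdetE, Matrix.mul_one]

lemma kerstep {n : Type*} [Fintype n] [DecidableEq n] (E A : Matrix n n ℝ)
    (hE : Eᵀ * A * E = A) (P Q : n → ℝ) :
    ∑ i, ∑ j, (∑ b, E i b * P b) * A i j * (∑ c, E j c * Q c)
      = ∑ b, ∑ c, P b * A b c * Q c := by
  have l : ∀ (B : Matrix n n ℝ) (v w : n → ℝ),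
      ∑ i, ∑ j, v i * B i j * w j = v ᵥ* B ⬝ᵥ w := by
    intro B v w
    simp only [Matrix.vecMul, dotProduct, Finset.sum_mul]
    rw [Finset.sum_comm]
  have hEP : ∀ v : n → ℝ, (fun i => ∑ b, E i b * v b) = E *ᵥ v := by
    intro v; rfl
  calc ∑ i, ∑ j, (∑ b, E i b * P b) * A i j * (∑ c, E j c * Q c)
      = (E *ᵥ P) ᵥ* A ⬝ᵥ (E *ᵥ Q) := by
        rw [← l A (E *ᵥ P) (E *ᵥ Q)]
        rfl
    _ = ((P ᵥ* Eᵀ) ᵥ* A) ⬝ᵥ (E *ᵥ Q) := by rw [Matrix.vecMul_transpose]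
    _ = (((P ᵥ* Eᵀ) ᵥ* A) ᵥ* E) ⬝ᵥ Q := by rw [Matrix.dotProduct_mulVec]
    _ = (P ᵥ* (Eᵀ * A * E)) ⬝ᵥ Q := by
        rw [Matrix.vecMul_vecMul, Matrix.vecMul_vecMul, Matrix.mul_assoc]
    _ = P ᵥ* A ⬝ᵥ Q := by rw [hE]
    _ = ∑ b, ∑ c, P b * A b c * Q c := (l A P Q).symm

end aux

theorem isometry_invariant_measure_mvopr
    (D : ℕ) (R : Matrix (Fin D) (Fin D) ℝ) (hR : Rᵀ * R = 1)
    (μ : Measure (Fin D → ℝ))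
    (hinv : Measure.map (fun x => R.mulVec x) μ = μ)
    (hint : ∀ α : Fin D → ℕ, Integrable (fun x => ∏ a, x a ^ α a) μ)
    (η : (Fin D → ℕ) → (Fin D → ℕ) → ℝ)
    (hηblock : ∀ α β, deg α ≠ deg β → η α β = 0)
    (hηchar : ∀ (x : Fin D → ℝ) (α : Fin D → ℕ),
      (∏ a, (R.mulVec x) a ^ α a) = ∑ᶠ β, η α β * ∏ a, x a ^ β a)
    (S H : (Fin D → ℕ) → (Fin D → ℕ) → ℝ)
    (hS1 : ∀ α β, deg α < deg β → S α β = 0)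
    (hS2 : ∀ α β, deg α = deg β → S α β = if α = β then 1 else 0)
    (hH : ∀ α β, deg α ≠ deg β → H α β = 0)
    (hfact : ∀ α β,
      (∑ᶠ γ, ∑ᶠ δ, S α γ * momG D μ γ δ * S β δ) = H α β)
    (hdet : ∀ ℓ : ℕ, IsUnit (momGTrunc D ℓ μ).det)
    (hHdet : ∀ k : ℕ, IsUnit (Hblock D k H).det) :
    (∀ α β, (∑ᶠ γ, ∑ᶠ δ, η α γ * momG D μ γ δ * η β δ) = momG D μ α β) ∧
    (∀ α β, (∑ᶠ γ, η α γ * S γ β) = ∑ᶠ γ, S α γ * η γ β) ∧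
    (∀ α β, (∑ᶠ γ, ∑ᶠ δ, η α γ * H γ δ * η β δ) = H α β) ∧
    (∀ (α : Fin D → ℕ) (x : Fin D → ℝ),
      mvP S α (R.mulVec x) = ∑ᶠ β, η α β * mvP S β x) ∧
    (∀ (ℓ : ℕ) (x y : Fin D → ℝ),
      CDker D ℓ S H (R.mulVec x) (R.mulVec y) = CDker D ℓ S H x y) := by
  -- basic facts about R
  have hRR : R * Rᵀ = 1 := mul_eq_one_comm.mp hR
  have hRinvx : ∀ y : Fin D → ℝ, R.mulVec (Rᵀ.mulVec y) = y := by
    intro y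
    rw [Matrix.mulVec_mulVec, hRR, Matrix.one_mulVec]
  have hmeas : Measurable fun x : Fin D → ℝ => R.mulVec x := by
    have : Continuous fun x : Fin D → ℝ => R.mulVec x :=
      LinearMap.continuous_of_finiteDimensional R.mulVecLin
    exact this.measurable
  have hmono_meas : ∀ α : Fin D → ℕ, Measurable fun x : Fin D → ℝ => ∏ a, x a ^ α a := by
    intro α
    exact Finset.measurable_prod _ fun a _ => ((measurable_pi_apply a).pow_const _)
  have hCOV : ∀ α : Fin D → ℕ,
      ∫ x, (∏ a, (R.mulVec x) a ^ α a) ∂μ = ∫ x, ∏ a, x a ^ α a ∂μ := by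
    intro α
    conv_rhs => rw [← hinv]
    rw [integral_map hmeas.aemeasurable (hmono_meas α).aestronglyMeasurable]
  have hηfin : ∀ (x : Fin D → ℝ) (α : Fin D → ℕ),
      (∏ a, (R.mulVec x) a ^ α a)
        = ∑ β ∈ Finset.Nat.antidiagonalTuple D (deg α), η α β * ∏ a, x a ^ β a := by
    intro x α
    rw [hηchar x α]
    apply finsum_sub
    intro β hβ
    rw [hηblock α β (by rw [mem_adt] at hβ; omega), zero_mul]
  have hmul_mono : ∀ (γ δ : Fin D → ℕ) (x : Fin D → ℝ),
      (∏ a, x a ^ γ a) * (∏ a, x a ^ δ a) = ∏ a, x a ^ (γ a + δ a) := by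
    intro γ δ x
    rw [← Finset.prod_mul_distrib]
    exact Finset.prod_congr rfl fun a _ => (pow_add _ _ _).symm
  have hint2 : ∀ γ δ : Fin D → ℕ,
      Integrable (fun x => (∏ a, x a ^ γ a) * (∏ a, x a ^ δ a)) μ := by
    intro γ δ
    have := hint (fun a => γ a + δ a)
    refine this.congr ?_
    filter_upwards with x
    exact (hmul_mono γ δ x).symm
  have hGmul : ∀ γ δ : Fin D → ℕ,
      momG D μ γ δ = ∫ x, (∏ a, x a ^ γ a) * (∏ a, x a ^ δ a) ∂μ := by
    intro γ δ
    unfold momG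
    congr 1
    funext x
    exact (hmul_mono γ δ x).symm
  -- invertibility of the blocks of η
  have hηdet : ∀ k : ℕ, IsUnit (Hblock D k η).det := by
    intro k
    rw [isUnit_iff_ne_zero]
    intro h0
    have h0t : ((Hblock D k η)ᵀ).det = 0 := by rwa [Matrix.det_transpose]
    obtain ⟨v, hv0, hv⟩ := Matrix.exists_mulVec_eq_zero_iff.mpr h0t
    have hrow : ∀ β (hβ : β ∈ Finset.Nat.antidiagonalTuple D k),
        ∑ i : Finset.Nat.antidiagonalTuple D k, v i * η i.1 β = 0 := by
      intro β hβ
      have := congrFun hv ⟨β, hβ⟩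
      simp only [Matrix.mulVec, dotProduct, Matrix.transpose_apply, Pi.zero_apply] at this
      rw [← this]
      exact Finset.sum_congr rfl fun i _ => by rw [mul_comm]; rfl
    have hcomb : ∀ y : Fin D → ℝ,
        ∑ i : Finset.Nat.antidiagonalTuple D k, v i * ∏ a, y a ^ (i.1 a) = 0 := by
      intro y
      have hx : ∀ i : Finset.Nat.antidiagonalTuple D k,
          (∏ a, y a ^ (i.1 a))
            = ∑ β ∈ Finset.Nat.antidiagonalTuple D k, η i.1 β * ∏ a, (Rᵀ.mulVec y) a ^ β a := by
        intro i
        have h1 := hηfin (Rᵀ.mulVec y) i.1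
        rw [hRinvx y] at h1
        rw [h1, mem_adt.mp i.2]
      calc ∑ i : Finset.Nat.antidiagonalTuple D k, v i * ∏ a, y a ^ (i.1 a)
          = ∑ i : Finset.Nat.antidiagonalTuple D k,
              ∑ β ∈ Finset.Nat.antidiagonalTuple D k,
                (v i * η i.1 β) * ∏ a, (Rᵀ.mulVec y) a ^ β a := by
            refine Finset.sum_congr rfl fun i _ => ?_
            rw [hx i, Finset.mul_sum]
            exact Finset.sum_congr rfl fun β _ => by ring
        _ = ∑ β ∈ Finset.Nat.antidiagonalTuple D k,
              (∑ i : Finset.Nat.antidiagonalTuple D k, v i * η i.1 β)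
                * ∏ a, (Rᵀ.mulVec y) a ^ β a := by
            rw [Finset.sum_comm]
            exact Finset.sum_congr rfl fun β _ => by rw [Finset.sum_mul]
        _ = 0 := by
            apply Finset.sum_eq_zero
            intro β hβ
            rw [hrow β hβ, zero_mul]
    set c : (Fin D → ℕ) → ℝ :=
      fun β => if h : β ∈ Finset.Nat.antidiagonalTuple D k then v ⟨β, h⟩ else 0 with hc
    have hcz : ∀ β ∈ Finset.Nat.antidiagonalTuple D k, c β = 0 := by
      apply mono_indep
      intro y
      rw [← Finset.sum_coe_sort (Finset.Nat.antidiagonalTuple D k)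
        (fun β => c β * ∏ a, y a ^ β a)]
      rw [← hcomb y]
      refine Finset.sum_congr rfl fun i _ => ?_
      congr 1
      simp [hc, i.2]
    apply hv0
    funext i
    have := hcz i.1 i.2
    simpa [hc, i.2] using this
  -- Part 1 : η G ηᵀ = G
  have part1 : ∀ α β, (∑ᶠ γ, ∑ᶠ δ, η α γ * momG D μ γ δ * η β δ) = momG D μ α β := by
    intro α β
    have l1 : (∑ᶠ γ, ∑ᶠ δ, η α γ * momG D μ γ δ * η β δ)
        = ∑ γ ∈ Finset.Nat.antidiagonalTuple D (deg α),
            ∑ δ ∈ Finset.Nat.antidiagonalTuple D (deg β), η α γ * momG D μ γ δ * η β δ := by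
      rw [finsum_sub (Finset.Nat.antidiagonalTuple D (deg α)) _ (fun γ hγ => by
        rw [finsum_eq_zero_of_forall_eq_zero fun δ => by
          rw [hηblock α γ (by rw [mem_adt] at hγ; omega)]; ring])]
      exact Finset.sum_congr rfl fun γ _ => finsum_sub _ _ (fun δ hδ => by
        rw [hηblock β δ (by rw [mem_adt] at hδ; omega)]; ring)
    have hintc : ∀ γ δ : Fin D → ℕ,
        Integrable (fun x => η α γ * ((∏ a, x a ^ γ a) * ∏ a, x a ^ δ a) * η β δ) μ :=
      fun γ δ => ((hint2 γ δ).const_mul _).mul_const _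
    have l2 : ∀ γ δ : Fin D → ℕ, η α γ * momG D μ γ δ * η β δ
        = ∫ x, η α γ * ((∏ a, x a ^ γ a) * ∏ a, x a ^ δ a) * η β δ ∂μ := by
      intro γ δ
      rw [hGmul γ δ, integral_mul_const, integral_const_mul]
    have l3 : (∑ γ ∈ Finset.Nat.antidiagonalTuple D (deg α),
            ∑ δ ∈ Finset.Nat.antidiagonalTuple D (deg β), η α γ * momG D μ γ δ * η β δ)
        = ∫ x, ∑ γ ∈ Finset.Nat.antidiagonalTuple D (deg α),
            ∑ δ ∈ Finset.Nat.antidiagonalTuple D (deg β),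
              η α γ * ((∏ a, x a ^ γ a) * ∏ a, x a ^ δ a) * η β δ ∂μ := by
      rw [integral_finset_sum _ (fun γ _ => integrable_finset_sum _ (fun δ _ => hintc γ δ))]
      refine Finset.sum_congr rfl fun γ _ => ?_
      rw [integral_finset_sum _ (fun δ _ => hintc γ δ)]
      exact Finset.sum_congr rfl fun δ _ => l2 γ δ
    rw [l1, l3]
    have l4 : ∀ x : Fin D → ℝ,
        (∑ γ ∈ Finset.Nat.antidiagonalTuple D (deg α),
            ∑ δ ∈ Finset.Nat.antidiagonalTuple D (deg β),
              η α γ * ((∏ a, x a ^ γ a) * ∏ a, x a ^ δ a) * η β δ)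
          = ∏ a, (R.mulVec x) a ^ (α a + β a) := by
      intro x
      rw [← hmul_mono α β (R.mulVec x), hηfin x α, hηfin x β, Finset.sum_mul_sum]
      exact Finset.sum_congr rfl fun γ _ => Finset.sum_congr rfl fun δ _ => by ring
    calc ∫ x, ∑ γ ∈ Finset.Nat.antidiagonalTuple D (deg α),
            ∑ δ ∈ Finset.Nat.antidiagonalTuple D (deg β),
              η α γ * ((∏ a, x a ^ γ a) * ∏ a, x a ^ δ a) * η β δ ∂μ
        = ∫ x, ∏ a, (R.mulVec x) a ^ (α a + β a) ∂μ := by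
          congr 1
          funext x
          exact l4 x
      _ = momG D μ α β := hCOV (fun a => α a + β a)
  -- the two candidate products
  set T : (Fin D → ℕ) → (Fin D → ℕ) → ℝ := fun α β => ∑ᶠ γ, η α γ * S γ β with hTdef
  set U : (Fin D → ℕ) → (Fin D → ℕ) → ℝ := fun α β => ∑ᶠ γ, S α γ * η γ β with hUdef
  have hTfin : ∀ α β, T α β = ∑ γ ∈ Finset.Nat.antidiagonalTuple D (deg α), η α γ * S γ β := by
    intro α β
    apply finsum_sub
    intro γ hγ
    rw [hηblock α γ (by rw [mem_adt] at hγ; omega), zero_mul]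
  have hUfin : ∀ α β, U α β = ∑ γ ∈ Finset.Nat.antidiagonalTuple D (deg β), S α γ * η γ β := by
    intro α β
    apply finsum_sub
    intro γ hγ
    rw [hηblock γ β (by rw [mem_adt] at hγ; omega), mul_zero]
  have hTtri : ∀ α β, deg α < deg β → T α β = 0 := by
    intro α β hab
    rw [hTfin]
    apply Finset.sum_eq_zero
    intro γ hγ
    rw [mem_adt] at hγ
    rw [hS1 γ β (by omega), mul_zero]
  have hUtri : ∀ α β, deg α < deg β → U α β = 0 := by
    intro α β hab
    rw [hUfin]
    apply Finset.sum_eq_zero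
    intro γ hγ
    rw [mem_adt] at hγ
    rw [hS1 α γ (by omega), zero_mul]
  have hTdiag : ∀ α β, deg α = deg β → T α β = η α β := by
    intro α β hab
    rw [hTfin]
    rw [Finset.sum_eq_single_of_mem β (mem_adt.mpr hab.symm) (fun γ hγ hne => by
      rw [mem_adt] at hγ
      rw [hS2 γ β (by omega), if_neg hne, mul_zero])]
    rw [hS2 β β rfl, if_pos rfl, mul_one]
  have hUdiag : ∀ α β, deg α = deg β → U α β = η α β := by
    intro α β hab
    rw [hUfin]
    rw [Finset.sum_eq_single_of_mem α (mem_adt.mpr hab) (fun γ hγ hne => by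
      rw [mem_adt] at hγ
      rw [hS2 α γ (by omega), if_neg (fun hc => hne hc.symm), zero_mul])]
    rw [hS2 α α rfl, if_pos rfl, one_mul]
  -- generic conversion of the double finsum with η-weights to finite sums
  have conv2 : ∀ (F : (Fin D → ℕ) → (Fin D → ℕ) → ℝ) (α β : Fin D → ℕ),
      (∑ᶠ γ, ∑ᶠ δ, η α γ * F γ δ * η β δ)
        = ∑ γ ∈ Finset.Nat.antidiagonalTuple D (deg α),
            ∑ δ ∈ Finset.Nat.antidiagonalTuple D (deg β), η α γ * F γ δ * η β δ := by
    intro F α β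
    rw [finsum_sub (Finset.Nat.antidiagonalTuple D (deg α)) _ (fun γ hγ => by
      rw [finsum_eq_zero_of_forall_eq_zero fun δ => by
        rw [hηblock α γ (by rw [mem_adt] at hγ; omega)]; ring])]
    exact Finset.sum_congr rfl fun γ _ => finsum_sub _ _ (fun δ hδ => by
      rw [hηblock β δ (by rw [mem_adt] at hδ; omega)]; ring)
  -- finite version of the factorization hypothesis
  have hfactfin : ∀ γ δ : Fin D → ℕ, H γ δ
      = ∑ γ' ∈ belowSet D (deg γ + 1), ∑ δ' ∈ belowSet D (deg δ + 1),
          S γ γ' * momG D μ γ' δ' * S δ δ' := by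
    intro γ δ
    rw [← hfact γ δ]
    rw [finsum_sub (belowSet D (deg γ + 1)) _ (fun γ' hγ' => by
      rw [finsum_eq_zero_of_forall_eq_zero fun δ' => by
        rw [hS1 γ γ' (by rw [mem_below] at hγ'; omega)]; ring])]
    exact Finset.sum_congr rfl fun γ' _ => finsum_sub _ _ (fun δ' hδ' => by
      rw [hS1 δ δ' (by rw [mem_below] at hδ'; omega)]; ring)
  -- expansions of the two quadratic forms
  have e1 : ∀ α β, (∑ᶠ γ, ∑ᶠ δ, η α γ * H γ δ * η β δ)
      = ∑ᶠ δ, (∑ᶠ γ, T α γ * momG D μ γ δ) * T β δ := by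
    intro α β
    have rhs1 : (∑ᶠ δ, (∑ᶠ γ, T α γ * momG D μ γ δ) * T β δ)
        = ∑ δ' ∈ belowSet D (deg β + 1),
            (∑ γ' ∈ belowSet D (deg α + 1), T α γ' * momG D μ γ' δ') * T β δ' := by
      rw [finsum_sub (belowSet D (deg β + 1)) _ (fun δ' hδ' => by
        rw [hTtri β δ' (by rw [mem_below] at hδ'; omega), mul_zero])]
      refine Finset.sum_congr rfl fun δ' _ => ?_
      rw [finsum_sub (belowSet D (deg α + 1)) _ (fun γ' hγ' => by
        rw [hTtri α γ' (by rw [mem_below] at hγ'; omega), zero_mul])]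
    calc (∑ᶠ γ, ∑ᶠ δ, η α γ * H γ δ * η β δ)
        = ∑ γ ∈ Finset.Nat.antidiagonalTuple D (deg α),
            ∑ δ ∈ Finset.Nat.antidiagonalTuple D (deg β), η α γ * H γ δ * η β δ :=
          conv2 H α β
      _ = ∑ γ ∈ Finset.Nat.antidiagonalTuple D (deg α),
            ∑ δ ∈ Finset.Nat.antidiagonalTuple D (deg β),
              ∑ γ' ∈ belowSet D (deg α + 1), ∑ δ' ∈ belowSet D (deg β + 1),
                (η α γ * S γ γ') * momG D μ γ' δ' * (η β δ * S δ δ') := by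
          refine Finset.sum_congr rfl fun γ hγ => Finset.sum_congr rfl fun δ hδ => ?_
          rw [mem_adt] at hγ hδ
          rw [hfactfin γ δ, hγ, hδ, pull2]
      _ = ∑ δ' ∈ belowSet D (deg β + 1),
            (∑ γ' ∈ belowSet D (deg α + 1),
              (∑ γ ∈ Finset.Nat.antidiagonalTuple D (deg α), η α γ * S γ γ')
                * momG D μ γ' δ')
            * (∑ δ ∈ Finset.Nat.antidiagonalTuple D (deg β), η β δ * S δ δ') :=
          (shuffle _ _ _ _ _ _ _).symm
      _ = ∑ δ' ∈ belowSet D (deg β + 1),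
            (∑ γ' ∈ belowSet D (deg α + 1), T α γ' * momG D μ γ' δ') * T β δ' := by
          refine Finset.sum_congr rfl fun δ' _ => ?_
          rw [← hTfin β δ']
          congr 1
          refine Finset.sum_congr rfl fun γ' _ => ?_
          rw [← hTfin α γ']
      _ = ∑ᶠ δ, (∑ᶠ γ, T α γ * momG D μ γ δ) * T β δ := rhs1.symm
  have e2 : ∀ α β, (∑ᶠ δ, (∑ᶠ γ, U α γ * momG D μ γ δ) * U β δ) = H α β := by
    intro α β
    have hUfinA : ∀ γ, U α γ = ∑ γ' ∈ belowSet D (deg α + 1), S α γ' * η γ' γ := by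
      intro γ
      apply finsum_sub
      intro γ' hγ'
      rw [hS1 α γ' (by rw [mem_below] at hγ'; omega), zero_mul]
    have hUfinB : ∀ δ, U β δ = ∑ δ' ∈ belowSet D (deg β + 1), S β δ' * η δ' δ := by
      intro δ
      apply finsum_sub
      intro δ' hδ'
      rw [hS1 β δ' (by rw [mem_below] at hδ'; omega), zero_mul]
    have inner : ∀ γ' ∈ belowSet D (deg α + 1), ∀ δ' ∈ belowSet D (deg β + 1),
        (∑ γ ∈ belowSet D (deg α + 1), ∑ δ ∈ belowSet D (deg β + 1),
          η γ' γ * momG D μ γ δ * η δ' δ) = momG D μ γ' δ' := by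
      intro γ' hγ' δ' hδ'
      rw [mem_below] at hγ' hδ'
      rw [← part1 γ' δ']
      rw [finsum_sub (belowSet D (deg α + 1)) _ (fun γ hγ => by
        rw [finsum_eq_zero_of_forall_eq_zero fun δ => by
          rw [hηblock γ' γ (by rw [mem_below] at hγ; omega)]; ring])]
      exact (Finset.sum_congr rfl fun γ _ => finsum_sub _ _ (fun δ hδ => by
        rw [hηblock δ' δ (by rw [mem_below] at hδ; omega)]; ring)).symm
    calc (∑ᶠ δ, (∑ᶠ γ, U α γ * momG D μ γ δ) * U β δ)
        = ∑ δ ∈ belowSet D (deg β + 1),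
            (∑ γ ∈ belowSet D (deg α + 1), U α γ * momG D μ γ δ) * U β δ := by
          rw [finsum_sub (belowSet D (deg β + 1)) _ (fun δ hδ => by
            rw [hUtri β δ (by rw [mem_below] at hδ; omega), mul_zero])]
          refine Finset.sum_congr rfl fun δ _ => ?_
          rw [finsum_sub (belowSet D (deg α + 1)) _ (fun γ hγ => by
            rw [hUtri α γ (by rw [mem_below] at hγ; omega), zero_mul])]
      _ = ∑ δ ∈ belowSet D (deg β + 1),
            (∑ γ ∈ belowSet D (deg α + 1),
              (∑ γ' ∈ belowSet D (deg α + 1), S α γ' * η γ' γ) * momG D μ γ δ)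
            * (∑ δ' ∈ belowSet D (deg β + 1), S β δ' * η δ' δ) := by
          refine Finset.sum_congr rfl fun δ _ => ?_
          rw [← hUfinB δ]
          congr 1
          refine Finset.sum_congr rfl fun γ _ => ?_
          rw [← hUfinA γ]
      _ = ∑ γ' ∈ belowSet D (deg α + 1), ∑ δ' ∈ belowSet D (deg β + 1),
            ∑ γ ∈ belowSet D (deg α + 1), ∑ δ ∈ belowSet D (deg β + 1),
              (S α γ' * η γ' γ) * momG D μ γ δ * (S β δ' * η δ' δ) :=
          shuffle _ _ _ _ _ _ _
      _ = ∑ γ' ∈ belowSet D (deg α + 1), ∑ δ' ∈ belowSet D (deg β + 1),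
            S α γ' * momG D μ γ' δ' * S β δ' := by
          refine Finset.sum_congr rfl fun γ' hγ' => Finset.sum_congr rfl fun δ' hδ' => ?_
          rw [pull2, inner γ' hγ' δ' hδ']
      _ = H α β := (hfactfin α β).symm
  -- block-diagonality of the quadratic forms
  have bdT : ∀ α β, deg α ≠ deg β →
      (∑ᶠ δ, (∑ᶠ γ, T α γ * momG D μ γ δ) * T β δ) = 0 := by
    intro α β hab
    rw [← e1 α β]
    rw [finsum_sub (Finset.Nat.antidiagonalTuple D (deg α)) _ (fun γ hγ => by
      rw [finsum_eq_zero_of_forall_eq_zero fun δ => by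
        rw [hηblock α γ (by rw [mem_adt] at hγ; omega)]; ring])]
    apply Finset.sum_eq_zero
    intro γ hγ
    rw [mem_adt] at hγ
    rw [finsum_sub (Finset.Nat.antidiagonalTuple D (deg β)) _ (fun δ hδ => by
      rw [hηblock β δ (by rw [mem_adt] at hδ; omega)]; ring)]
    apply Finset.sum_eq_zero
    intro δ hδ
    rw [mem_adt] at hδ
    rw [hH γ δ (by omega)]
    ring
  have bdU : ∀ α β, deg α ≠ deg β →
      (∑ᶠ δ, (∑ᶠ γ, U α γ * momG D μ γ δ) * U β δ) = 0 := by
    intro α β hab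
    rw [e2 α β]
    exact hH α β hab
  -- key vanishing lemma
  have key0 : ∀ X : (Fin D → ℕ) → (Fin D → ℕ) → ℝ,
      (∀ α β, deg α < deg β → X α β = 0) →
      (∀ α β, deg α = deg β → X α β = η α β) →
      (∀ α β, deg α ≠ deg β → (∑ᶠ δ, (∑ᶠ γ, X α γ * momG D μ γ δ) * X β δ) = 0) →
      ∀ (α δ0 : Fin D → ℕ), deg δ0 < deg α → (∑ᶠ γ, X α γ * momG D μ γ δ0) = 0 := by
    intro X htri hdiag hbd α
    have main : ∀ d, d < deg α → ∀ δ0, deg δ0 = d → (∑ᶠ γ, X α γ * momG D μ γ δ0) = 0 := by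
      intro d
      induction d using Nat.strong_induction_on with
      | _ d IH =>
        intro hd δ0 hδ0
        set w : {x // x ∈ Finset.Nat.antidiagonalTuple D d} → ℝ :=
          fun j => ∑ᶠ γ, X α γ * momG D μ γ j.1 with hw
        have hEw : (Hblock D d η).mulVec w = 0 := by
          funext i
          have hdegi : deg i.1 = d := mem_adt.mp i.2
          have hbd0 := hbd α i.1 (by rw [hdegi]; omega)
          have c1 : (∑ᶠ δ, (∑ᶠ γ, X α γ * momG D μ γ δ) * X i.1 δ)
              = ∑ δ ∈ belowSet D (d + 1), (∑ᶠ γ, X α γ * momG D μ γ δ) * X i.1 δ := by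
            apply finsum_sub
            intro δ hδ
            rw [htri i.1 δ (by rw [mem_below] at hδ; omega), mul_zero]
          rw [c1, sum_below_succ] at hbd0
          have c2 : ∑ δ ∈ belowSet D d, (∑ᶠ γ, X α γ * momG D μ γ δ) * X i.1 δ = 0 := by
            apply Finset.sum_eq_zero
            intro δ hδ
            rw [mem_below] at hδ
            rw [IH (deg δ) (by omega) (by omega) δ rfl, zero_mul]
          rw [c2, zero_add] at hbd0
          simp only [Matrix.mulVec, dotProduct, Pi.zero_apply]
          rw [← hbd0]
          rw [← Finset.sum_coe_sort (Finset.Nat.antidiagonalTuple D d)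
            (fun δ => (∑ᶠ γ, X α γ * momG D μ γ δ) * X i.1 δ)]
          refine Finset.sum_congr rfl fun j _ => ?_
          rw [hdiag i.1 j.1 (by rw [hdegi]; exact (mem_adt.mp j.2).symm)]
          rw [mul_comm]
          rfl
        have hw0 : w = 0 := by
          have h2 : (Hblock D d η)⁻¹.mulVec ((Hblock D d η).mulVec w) = w := by
            rw [Matrix.mulVec_mulVec, Matrix.nonsing_inv_mul _ (hηdet d), Matrix.one_mulVec]
          rw [← h2, hEw, Matrix.mulVec_zero]
        have hfin := congrFun hw0 ⟨δ0, mem_adt.mpr hδ0⟩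
        simpa [hw] using hfin
    intro δ0 h
    exact main (deg δ0) h δ0 rfl
  -- Part 2 : η S = S η
  have part2 : ∀ α β, T α β = U α β := by
    have hTG0 := key0 T hTtri hTdiag bdT
    have hUG0 := key0 U hUtri hUdiag bdU
    intro α β
    rcases lt_trichotomy (deg α) (deg β) with hlt | heq | hgt
    · rw [hTtri α β hlt, hUtri α β hlt]
    · rw [hTdiag α β heq, hUdiag α β heq]
    · -- deg β < deg α
      set r : {x // x ∈ belowSet D (deg α)} → ℝ := fun j => T α j.1 - U α j.1 with hr
      have hrG : r ᵥ* (momGTrunc D (deg α) μ) = 0 := by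
        funext j0
        have hdj0 : deg j0.1 < deg α := mem_below.mp j0.2
        have hTGf : (∑ᶠ γ, T α γ * momG D μ γ j0.1)
            = ∑ γ ∈ belowSet D (deg α + 1), T α γ * momG D μ γ j0.1 :=
          finsum_sub _ _ (fun γ hγ => by
            rw [hTtri α γ (by rw [mem_below] at hγ; omega), zero_mul])
        have hUGf : (∑ᶠ γ, U α γ * momG D μ γ j0.1)
            = ∑ γ ∈ belowSet D (deg α + 1), U α γ * momG D μ γ j0.1 :=
          finsum_sub _ _ (fun γ hγ => by
            rw [hUtri α γ (by rw [mem_below] at hγ; omega), zero_mul])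
        have h1 : ∑ γ ∈ belowSet D (deg α + 1), T α γ * momG D μ γ j0.1 = 0 := by
          rw [← hTGf]; exact hTG0 α j0.1 hdj0
        have h2 : ∑ γ ∈ belowSet D (deg α + 1), U α γ * momG D μ γ j0.1 = 0 := by
          rw [← hUGf]; exact hUG0 α j0.1 hdj0
        rw [sum_below_succ] at h1 h2
        have hdc : ∑ γ ∈ Finset.Nat.antidiagonalTuple D (deg α), T α γ * momG D μ γ j0.1
            = ∑ γ ∈ Finset.Nat.antidiagonalTuple D (deg α), U α γ * momG D μ γ j0.1 := by
          refine Finset.sum_congr rfl fun γ hγ => ?_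
          rw [mem_adt] at hγ
          rw [hTdiag α γ (by omega), hUdiag α γ (by omega)]
        have h3 : ∑ γ ∈ belowSet D (deg α), (T α γ - U α γ) * momG D μ γ j0.1 = 0 := by
          simp only [sub_mul]
          rw [Finset.sum_sub_distrib]
          linarith [h1, h2, hdc]
        rw [← Finset.sum_coe_sort (belowSet D (deg α))
          (fun γ => (T α γ - U α γ) * momG D μ γ j0.1)] at h3
        simp only [Matrix.vecMul, dotProduct, Pi.zero_apply]
        rw [← h3]
        rfl
      have hr0 : r = 0 := by
        have h2 : r ᵥ* (momGTrunc D (deg α) μ * (momGTrunc D (deg α) μ)⁻¹) = r := by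
          rw [Matrix.mul_nonsing_inv _ (hdet (deg α)), Matrix.vecMul_one]
        rw [← h2, ← Matrix.vecMul_vecMul, hrG, Matrix.zero_vecMul]
      have hfin := congrFun hr0 ⟨β, mem_below.mpr hgt⟩
      have : T α β - U α β = 0 := by simpa [hr] using hfin
      linarith
  -- Part 3 : η H ηᵀ = H
  have part3 : ∀ α β, (∑ᶠ γ, ∑ᶠ δ, η α γ * H γ δ * η β δ) = H α β := by
    intro α β
    rw [e1 α β]
    have : T = U := funext fun α => funext fun β => part2 α β
    rw [this]
    exact e2 α β
  -- Part 4 : P(Rx) = η P(x)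
  have part4 : ∀ (α : Fin D → ℕ) (x : Fin D → ℝ),
      mvP S α (R.mulVec x) = ∑ᶠ β, η α β * mvP S β x := by
    intro α x
    have hUA : ∀ γ, U α γ = ∑ β' ∈ belowSet D (deg α + 1), S α β' * η β' γ := by
      intro γ
      apply finsum_sub
      intro β' hβ'
      rw [hS1 α β' (by rw [mem_below] at hβ'; omega), zero_mul]
    have lhs : mvP S α (R.mulVec x)
        = ∑ γ ∈ belowSet D (deg α + 1), U α γ * ∏ a, x a ^ γ a := by
      have h0 : mvP S α (R.mulVec x)
          = ∑ β' ∈ belowSet D (deg α + 1), S α β' * ∏ a, (R.mulVec x) a ^ β' a :=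
        finsum_sub _ _ (fun β' hβ' => by
          rw [hS1 α β' (by rw [mem_below] at hβ'; omega), zero_mul])
      rw [h0]
      calc ∑ β' ∈ belowSet D (deg α + 1), S α β' * ∏ a, (R.mulVec x) a ^ β' a
          = ∑ β' ∈ belowSet D (deg α + 1), ∑ γ ∈ belowSet D (deg α + 1),
              (S α β' * η β' γ) * ∏ a, x a ^ γ a := by
            refine Finset.sum_congr rfl fun β' hβ' => ?_
            rw [mem_below] at hβ'
            rw [hηfin x β']
            have hsub : Finset.Nat.antidiagonalTuple D (deg β') ⊆ belowSet D (deg α + 1) := by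
              intro γ hγ
              rw [mem_adt] at hγ
              rw [mem_below]
              omega
            rw [Finset.sum_subset hsub (fun γ hγ1 hγ2 => by
              rw [hηblock β' γ (fun hc => hγ2 (mem_adt.mpr hc.symm)), zero_mul])]
            rw [Finset.mul_sum]
            exact Finset.sum_congr rfl fun γ _ => by ring
        _ = ∑ γ ∈ belowSet D (deg α + 1), U α γ * ∏ a, x a ^ γ a := by
            rw [Finset.sum_comm]
            refine Finset.sum_congr rfl fun γ _ => ?_
            rw [hUA γ, Finset.sum_mul]
    have rhs : (∑ᶠ β, η α β * mvP S β x)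
        = ∑ γ ∈ belowSet D (deg α + 1), T α γ * ∏ a, x a ^ γ a := by
      have h0 : (∑ᶠ β, η α β * mvP S β x)
          = ∑ β ∈ Finset.Nat.antidiagonalTuple D (deg α), η α β * mvP S β x :=
        finsum_sub _ _ (fun β hβ => by
          rw [hηblock α β (by rw [mem_adt] at hβ; omega), zero_mul])
      rw [h0]
      calc ∑ β ∈ Finset.Nat.antidiagonalTuple D (deg α), η α β * mvP S β x
          = ∑ β ∈ Finset.Nat.antidiagonalTuple D (deg α),
              ∑ γ ∈ belowSet D (deg α + 1), (η α β * S β γ) * ∏ a, x a ^ γ a := by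
            refine Finset.sum_congr rfl fun β hβ => ?_
            rw [mem_adt] at hβ
            have hm : mvP S β x = ∑ γ ∈ belowSet D (deg α + 1), S β γ * ∏ a, x a ^ γ a :=
              finsum_sub _ _ (fun γ hγ => by
                rw [hS1 β γ (by rw [mem_below] at hγ; omega), zero_mul])
            rw [hm, Finset.mul_sum]
            exact Finset.sum_congr rfl fun γ _ => by ring
        _ = ∑ γ ∈ belowSet D (deg α + 1), T α γ * ∏ a, x a ^ γ a := by
            rw [Finset.sum_comm]
            refine Finset.sum_congr rfl fun γ _ => ?_
            rw [hTfin α γ, Finset.sum_mul]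
    rw [lhs, rhs]
    exact Finset.sum_congr rfl fun γ _ => by rw [part2 α γ]
  -- Part 5 : CD kernel invariance
  have part5 : ∀ (ℓ : ℕ) (x y : Fin D → ℝ),
      CDker D ℓ S H (R.mulVec x) (R.mulVec y) = CDker D ℓ S H x y := by
    intro ℓ x y
    unfold CDker
    refine Finset.sum_congr rfl fun k _ => ?_
    have hEH : Hblock D k η * Hblock D k H * (Hblock D k η)ᵀ = Hblock D k H := by
      ext i j
      have h3 := part3 i.1 j.1
      rw [conv2 H i.1 j.1] at h3
      have hdi : deg i.1 = k := mem_adt.mp i.2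
      have hdj : deg j.1 = k := mem_adt.mp j.2
      rw [hdi, hdj] at h3
      calc (Hblock D k η * Hblock D k H * (Hblock D k η)ᵀ) i j
          = ∑ δ : {v // v ∈ Finset.Nat.antidiagonalTuple D k},
              ∑ γ : {v // v ∈ Finset.Nat.antidiagonalTuple D k},
                (η i.1 γ.1 * H γ.1 δ.1) * η j.1 δ.1 := by
            simp [Matrix.mul_apply, Hblock, Finset.sum_mul]
        _ = ∑ γ : {v // v ∈ Finset.Nat.antidiagonalTuple D k},
              ∑ δ : {v // v ∈ Finset.Nat.antidiagonalTuple D k},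
                η i.1 γ.1 * H γ.1 δ.1 * η j.1 δ.1 := by
            rw [Finset.sum_comm]
        _ = ∑ γ ∈ Finset.Nat.antidiagonalTuple D k,
              ∑ δ ∈ Finset.Nat.antidiagonalTuple D k, η i.1 γ * H γ δ * η j.1 δ := by
            rw [← Finset.sum_coe_sort (Finset.Nat.antidiagonalTuple D k)
              (fun γ => ∑ δ ∈ Finset.Nat.antidiagonalTuple D k, η i.1 γ * H γ δ * η j.1 δ)]
            refine Finset.sum_congr rfl fun γ _ => ?_
            rw [← Finset.sum_coe_sort (Finset.Nat.antidiagonalTuple D k)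
              (fun δ => η i.1 γ.1 * H γ.1 δ * η j.1 δ)]
        _ = H i.1 j.1 := h3
        _ = Hblock D k H i j := rfl
    have hsand : (Hblock D k η)ᵀ * (Hblock D k H)⁻¹ * Hblock D k η = (Hblock D k H)⁻¹ :=
      matrix_sandwich (Hblock D k η) (Hblock D k H) (hηdet k) hEH
    have hP : ∀ (z : Fin D → ℝ) (i : {v // v ∈ Finset.Nat.antidiagonalTuple D k}),
        mvP S i.1 (R.mulVec z)
          = ∑ b : {v // v ∈ Finset.Nat.antidiagonalTuple D k},
              Hblock D k η i b * mvP S b.1 z := by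
      intro z i
      rw [part4 i.1 z]
      rw [finsum_sub (Finset.Nat.antidiagonalTuple D k) _ (fun β hβ => by
        rw [hηblock i.1 β (by rw [mem_adt.mp i.2]; rw [mem_adt] at hβ; omega), zero_mul])]
      rw [← Finset.sum_coe_sort (Finset.Nat.antidiagonalTuple D k)
        (fun β => η i.1 β * mvP S β z)]
      rfl
    calc ∑ i : {v // v ∈ Finset.Nat.antidiagonalTuple D k},
          ∑ j : {v // v ∈ Finset.Nat.antidiagonalTuple D k},
            mvP S i.1 (R.mulVec x) * (Hblock D k H)⁻¹ i j * mvP S j.1 (R.mulVec y)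
        = ∑ i : {v // v ∈ Finset.Nat.antidiagonalTuple D k},
            ∑ j : {v // v ∈ Finset.Nat.antidiagonalTuple D k},
              (∑ b : {v // v ∈ Finset.Nat.antidiagonalTuple D k},
                  Hblock D k η i b * mvP S b.1 x)
                * (Hblock D k H)⁻¹ i j
                * (∑ c : {v // v ∈ Finset.Nat.antidiagonalTuple D k},
                    Hblock D k η j c * mvP S c.1 y) := by
          refine Finset.sum_congr rfl fun i _ => Finset.sum_congr rfl fun j _ => ?_
          rw [hP x i, hP y j]
      _ = ∑ i : {v // v ∈ Finset.Nat.antidiagonalTuple D k},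
            ∑ j : {v // v ∈ Finset.Nat.antidiagonalTuple D k},
              mvP S i.1 x * (Hblock D k H)⁻¹ i j * mvP S j.1 y :=
          kerstep (Hblock D k η) ((Hblock D k H)⁻¹) hsand
            (fun b => mvP S b.1 x) (fun c => mvP S c.1 y)
  exact ⟨part1, part2, part3, part4, part5⟩

end MVOPR19
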